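/- Let A and B be independent N×N real random matrices, and assume B is orthogonally invariant, i.e. u B uᵀ has the same distribution as B for every orthogonal matrix u. Let m : Mat(N,ℝ) → Mat(N,ℝ) be measurable with m(a)m(a)ᵀ = a aᵀ for all a. Then A B Aᵀ has the same distribution as m(A) B m(A)ᵀ. -/

import Mathlib

open MeasureTheory ProbabilityTheory Matrix Filter
open scoped ENNReal Topology

noncomputable section

/-- The space of `N × N` real matrices. -/
abbrev Mat (N : ℕ) := Matrix (Fin N) (Fin N) ℝ

instance (N : ℕ) : MeasurableSpace (Mat N) :=
  inferInstanceAs (MeasurableSpace (Fin N → Fin N → ℝ))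

instance (N : ℕ) : BorelSpace (Mat N) :=
  inferInstanceAs (BorelSpace (Fin N → Fin N → ℝ))

open scoped Classical in
/-- The eigenvalues of a matrix (junk value `0` if the matrix is not symmetric). -/
def eigs {N : ℕ} (s : Mat N) : Fin N → ℝ :=
  if h : s.IsHermitian then h.eigenvalues else fun _ => 0

/-- The largest eigenvalue of a symmetric matrix. -/
def lambdaMax {N : ℕ} (s : Mat N) : ℝ := ⨆ i, eigs s i

/-- The eigenvalues of a symmetric matrix in nonincreasing order:
`eigDesc s k` is the `(k+1)`-th largest eigenvalue `λ_{k+1}(s)`. -/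
def eigDesc {N : ℕ} (s : Mat N) (k : Fin N) : ℝ :=
  (eigs s ∘ Tuple.sort (eigs s)) k.rev

open scoped Classical in
/-- The positive semidefinite square root of a positive semidefinite matrix
(junk value `0` otherwise). -/
def msqrt {N : ℕ} (a : Mat N) : Mat N :=
  if h : a.PosSemidef then
    (h.1.eigenvectorUnitary : Mat N) *
      diagonal ((RCLike.ofReal : ℝ → ℝ) ∘ Real.sqrt ∘ h.1.eigenvalues) *
      (star (h.1.eigenvectorUnitary : Mat N))
  else 0

/-- `log⁺ x = max (log x) 0`. -/
def logPlus (x : ℝ) : ℝ := max (Real.log x) 0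

/-- The expectation of a (not necessarily integrable) real random variable, with values in
`[-∞, +∞]`: the difference of the lower integrals of the positive and negative parts. -/
def sInt {Ω : Type*} [MeasurableSpace Ω] (P : Measure Ω) (f : Ω → ℝ) : EReal :=
  ((∫⁻ ω, ENNReal.ofReal (f ω) ∂P : ℝ≥0∞) : EReal) -
    ((∫⁻ ω, ENNReal.ofReal (-f ω) ∂P : ℝ≥0∞) : EReal)

/-- `leftProd A n = A₁ ⋯ A_n` (`0`-indexed: `A 0 * A 1 * ⋯ * A (n-1)`). -/
def leftProd {Ω : Type*} {N : ℕ} (A : ℕ → Ω → Mat N) : ℕ → Ω → Mat N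
  | 0 => fun _ => 1
  | n + 1 => fun ω => leftProd A n ω * A n ω

/-- The top Lyapunov exponent
`γ = inf_{n ≥ 1} (1/n) E[log λ_max(A₁ ⋯ A_n A_nᵀ ⋯ A₁ᵀ)]`, a value in `[-∞, +∞)`. -/
def lyap {Ω : Type*} [MeasurableSpace Ω] {N : ℕ} (P : Measure Ω) (A : ℕ → Ω → Mat N) : EReal :=
  ⨅ n : ℕ, (((1 : ℝ) / (n + 1) : ℝ) : EReal) *
    sInt P (fun ω => Real.log (lambdaMax (leftProd A (n + 1) ω * (leftProd A (n + 1) ω)ᵀ)))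

/-- The `k × k` leading principal submatrix. -/
def subK {N k : ℕ} (hk : k ≤ N) (x : Mat N) : Mat k :=
  x.submatrix (Fin.castLE hk) (Fin.castLE hk)

end

lemma toEuclideanLin_mul {N : ℕ} (A B : Mat N) :
    Matrix.toEuclideanLin (A * B) =
      (Matrix.toEuclideanLin A).comp (Matrix.toEuclideanLin B) := by
  ext v
  simp [Matrix.toEuclideanLin_apply, Matrix.mulVec_mulVec]

lemma exists_orth {N : ℕ} (X Y : Mat N) (h : X * Xᵀ = Y * Yᵀ) :
    ∃ u : Mat N, u * uᵀ = 1 ∧ X = Y * u := by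
  classical
  set V := EuclideanSpace ℝ (Fin N)
  set f : V →ₗ[ℝ] V := Matrix.toEuclideanLin Xᵀ with hf
  set g : V →ₗ[ℝ] V := Matrix.toEuclideanLin Yᵀ with hg
  have hadjf : ∀ v w : V, inner ℝ (f v) (f w) = (inner ℝ v (Matrix.toEuclideanLin (X * Xᵀ) w) : ℝ) := by
    intro v w
    have := Matrix.toEuclideanLin_conjTranspose_eq_adjoint (𝕜 := ℝ) (Xᵀ)
    have hct : (Xᵀ).conjTranspose = X := by
      ext i j; simp [Matrix.conjTranspose_apply]
    rw [hct] at this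
    rw [toEuclideanLin_mul, LinearMap.comp_apply, ← hf, this,
      LinearMap.adjoint_inner_right]
  have hadjg : ∀ v w : V, inner ℝ (g v) (g w) = (inner ℝ v (Matrix.toEuclideanLin (Y * Yᵀ) w) : ℝ) := by
    intro v w
    have := Matrix.toEuclideanLin_conjTranspose_eq_adjoint (𝕜 := ℝ) (Yᵀ)
    have hct : (Yᵀ).conjTranspose = Y := by
      ext i j; simp [Matrix.conjTranspose_apply]
    rw [hct] at this
    rw [toEuclideanLin_mul, LinearMap.comp_apply, ← hg, this,
      LinearMap.adjoint_inner_right]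
  have hinner : ∀ v w : V, (inner ℝ (f v) (f w) : ℝ) = inner ℝ (g v) (g w) := by
    intro v w; rw [hadjf, hadjg, h]
  have hnorm : ∀ v : V, ‖f v‖ = ‖g v‖ := by
    intro v
    have : (‖f v‖ : ℝ) ^ 2 = ‖g v‖ ^ 2 := by
      rw [← real_inner_self_eq_norm_sq, ← real_inner_self_eq_norm_sq, hinner]
    nlinarith [norm_nonneg (f v), norm_nonneg (g v)]
  have hker : LinearMap.ker g ≤ LinearMap.ker f := by
    intro v hv
    rw [LinearMap.mem_ker] at hv ⊢
    have := hnorm v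
    rw [hv, norm_zero, norm_eq_zero] at this
    exact this
  set T0 : LinearMap.range g →ₗ[ℝ] V :=
    ((LinearMap.ker g).liftQ f hker).comp
      (g.quotKerEquivRange.symm : LinearMap.range g →ₗ[ℝ] V ⧸ LinearMap.ker g) with hT0def
  have hT0 : ∀ v : V, T0 ⟨g v, LinearMap.mem_range_self g v⟩ = f v := by
    intro v
    have h1 : g.quotKerEquivRange.symm ⟨g v, LinearMap.mem_range_self g v⟩
        = (LinearMap.ker g).mkQ v := g.quotKerEquivRange_symm_apply_image v _
    simp [hT0def, LinearMap.comp_apply, h1]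
  have hT0norm : ∀ s : LinearMap.range g, ‖T0 s‖ = ‖s‖ := by
    rintro ⟨_, v, rfl⟩
    rw [hT0 v]
    simpa using (hnorm v).symm ▸ rfl
  set L : LinearMap.range g →ₗᵢ[ℝ] V := ⟨T0, hT0norm⟩ with hLdef
  set T := L.extend with hTdef
  have hT : ∀ v : V, T (g v) = f v := by
    intro v
    have := L.extend_apply ⟨g v, LinearMap.mem_range_self g v⟩
    rw [hTdef, this]
    exact hT0 v
  set W : Mat N := Matrix.toEuclideanLin.symm T.toLinearMap with hWdef
  have hTW : Matrix.toEuclideanLin W = T.toLinearMap := by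
    rw [hWdef]; exact Matrix.toEuclideanLin.apply_symm_apply _
  have hW1 : W * Yᵀ = Xᵀ := by
    apply Matrix.toEuclideanLin.injective
    rw [toEuclideanLin_mul, hTW]
    exact LinearMap.ext fun v => hT v
  have hW2 : Wᵀ * W = 1 := by
    ext i j
    have hinner := T.inner_map_map (EuclideanSpace.single i (1:ℝ))
      (EuclideanSpace.single j (1:ℝ))
    have happ : ∀ k : Fin N, ∀ x : EuclideanSpace ℝ (Fin N), T x k =
        (W *ᵥ (x : Fin N → ℝ)) k := by
      intro k x
      have : T x = Matrix.toEuclideanLin W x := by rw [hTW]; rfl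
      rw [this, Matrix.toEuclideanLin_apply]
    have hcol : ∀ (a k : Fin N), T (EuclideanSpace.single a (1:ℝ)) k = W k a := by
      intro a k
      rw [happ]
      have hx : ((EuclideanSpace.single a (1:ℝ)) : Fin N → ℝ) = Pi.single a 1 := rfl
      rw [hx, Matrix.mulVec_single]
      exact mul_one _
    have hinner := T.inner_map_map (EuclideanSpace.single i (1:ℝ))
      (EuclideanSpace.single j (1:ℝ))
    rw [PiLp.inner_apply, PiLp.inner_apply] at hinner
    simp only [RCLike.inner_apply, starRingEnd_apply, star_trivial] at hinner
    simp only [hcol] at hinner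
    simp only [EuclideanSpace.single_apply] at hinner
    rw [Matrix.mul_apply]
    simp only [Matrix.transpose_apply, Matrix.one_apply]
    rw [Finset.sum_congr rfl (fun x _ => mul_comm (W x i) (W x j)), hinner]
    by_cases hij : i = j <;> simp [hij, eq_comm]
  refine ⟨Wᵀ, by rw [Matrix.transpose_transpose]; exact hW2, ?_⟩
  have := congrArg Matrix.transpose hW1
  rw [Matrix.transpose_mul, Matrix.transpose_transpose, Matrix.transpose_transpose] at this
  exact this.symm

lemma Measurable.matMul {α : Type*} [MeasurableSpace α] {N : ℕ} {f g : α → Mat N}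
    (hf : Measurable f) (hg : Measurable g) : Measurable (fun a => f a * g a) := by
  refine measurable_pi_lambda _ fun i => measurable_pi_lambda _ fun j => ?_
  simp only [Matrix.mul_apply]
  exact Finset.measurable_sum _ fun k _ =>
    ((measurable_pi_apply k).comp ((measurable_pi_apply i).comp hf)).mul
      ((measurable_pi_apply j).comp ((measurable_pi_apply k).comp hg))

lemma Measurable.matTranspose {α : Type*} [MeasurableSpace α] {N : ℕ} {f : α → Mat N}
    (hf : Measurable f) : Measurable (fun a => (f a)ᵀ) := by
  refine measurable_pi_lambda _ fun i => measurable_pi_lambda _ fun j => ?_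
  exact (measurable_pi_apply i).comp ((measurable_pi_apply j).comp hf)

/-- If `A` and `B` are independent and `B` is orthogonally invariant, then
for any measurable `m` with `m(a) m(a)ᵀ = a aᵀ` for all `a`, the random matrices `A B Aᵀ`
and `m(A) B m(A)ᵀ` have the same distribution. -/
theorem abat_eq_mat_dist
    {N : ℕ} {Ω : Type*} [MeasurableSpace Ω] (P : Measure Ω) [IsProbabilityMeasure P]
    (A B : Ω → Mat N) (hA : Measurable A) (hB : Measurable B)
    (hindep : IndepFun A B P)
    (hBinv : ∀ u : Mat N, u * uᵀ = 1 →
      Measure.map (fun ω => u * B ω * uᵀ) P = Measure.map B P)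
    (m : Mat N → Mat N) (hm : Measurable m) (hmm : ∀ a : Mat N, m a * (m a)ᵀ = a * aᵀ) :
    Measure.map (fun ω => A ω * B ω * (A ω)ᵀ) P
      = Measure.map (fun ω => m (A ω) * B ω * (m (A ω))ᵀ) P := by
  set μ := Measure.map A P with hμ
  set ν := Measure.map B P with hν
  set F : Mat N × Mat N → Mat N := fun p => p.1 * p.2 * p.1ᵀ with hFdef
  set G : Mat N × Mat N → Mat N := fun p => m p.1 * p.2 * (m p.1)ᵀ with hGdef
  have hF : Measurable F :=
    (measurable_fst.matMul measurable_snd).matMul measurable_fst.matTranspose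
  have hG : Measurable G :=
    ((hm.comp measurable_fst).matMul measurable_snd).matMul
      (hm.comp measurable_fst).matTranspose
  have hpairmeas : Measurable fun ω => (A ω, B ω) := hA.prodMk hB
  have hpair : Measure.map (fun ω => (A ω, B ω)) P = μ.prod ν :=
    (indepFun_iff_map_prod_eq_prod_map_map hA.aemeasurable hB.aemeasurable).mp hindep
  have hL : Measure.map (fun ω => A ω * B ω * (A ω)ᵀ) P = Measure.map F (μ.prod ν) := by
    rw [← hpair, Measure.map_map hF hpairmeas]; rfl
  have hR : Measure.map (fun ω => m (A ω) * B ω * (m (A ω))ᵀ) P = Measure.map G (μ.prod ν) := by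
    rw [← hpair, Measure.map_map hG hpairmeas]; rfl
  rw [hL, hR]
  ext s hs
  rw [Measure.map_apply hF hs, Measure.map_apply hG hs,
    Measure.prod_apply (hF hs), Measure.prod_apply (hG hs)]
  refine MeasureTheory.lintegral_congr fun a => ?_
  obtain ⟨u, hu, hau⟩ := exists_orth a (m a) ((hmm a).symm)
  have hconj : Measurable fun b : Mat N => u * b * uᵀ :=
    ((measurable_const.matMul measurable_id).matMul measurable_const :)
  have hma : Measurable fun c : Mat N => m a * c * (m a)ᵀ :=
    ((measurable_const.matMul measurable_id).matMul measurable_const :)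
  have hinv : Measure.map (fun b : Mat N => u * b * uᵀ) ν = ν := by
    rw [hν, Measure.map_map hconj hB]
    exact hBinv u hu
  have hset : (Prod.mk a ⁻¹' (F ⁻¹' s))
      = (fun b => u * b * uᵀ) ⁻¹' ((fun c => m a * c * (m a)ᵀ) ⁻¹' s) := by
    ext b
    have : a * b * aᵀ = m a * (u * b * uᵀ) * (m a)ᵀ := by
      set c := m a with hc
      rw [hau]
      simp only [Matrix.transpose_mul, Matrix.mul_assoc]
    simp only [Set.mem_preimage, hFdef, this]
  have hset2 : (Prod.mk a ⁻¹' (G ⁻¹' s)) = (fun c => m a * c * (m a)ᵀ) ⁻¹' s := rfl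
  rw [hset, hset2, ← Measure.map_apply hconj (hma hs), hinv]
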